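/- Let n, m ∈ ℕ with m ≤ n, let π be a permutation of Fin n, and let B₀, B₁ be disjoint subsets of Fin n with B₀ ∪ B₁ = { i : Fin n | (π i : ℕ) < m }. Define y : Fin n → ℝ by y i = 1 if i ∈ B₁ and y i = 0 otherwise. Let x : Fin n → ℝ satisfy x i ∈ {0,1} for all i, x i = 1 for all i ∈ B₁, and x i = 0 for all i ∈ B₀. Then for every permutation γ of Fin n: if (π • y)|m ≺ (π • (γ • y))|m, then (π • x)|m ≺ (π • (γ • x))|m; in particular x violates the symmetry handling constraint (π • x)|m ⪰ (π • (γ • x))|m. -/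

import Mathlib

/-- Action of a permutation of `Fin n` on vectors `x : Fin n → ℝ`:
`(γ • x) i = x (γ⁻¹ i)`. -/
def pact {n : ℕ} (γ : Equiv.Perm (Fin n)) (x : Fin n → ℝ) : Fin n → ℝ :=
  fun i => x (γ⁻¹ i)

/-- Lexicographic order `u ⪰ v` on `Fin m → ℝ`. -/
def lexGe {m : ℕ} (u v : Fin m → ℝ) : Prop :=
  u = v ∨ ∃ k : Fin m, (∀ i : Fin m, i < k → u i = v i) ∧ v k < u k

/-- Strict lexicographic order: `u ≻ v`. -/
def lexGt {m : ℕ} (u v : Fin m → ℝ) : Prop :=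
  lexGe u v ∧ u ≠ v

/-- Restriction of `z : Fin n → ℝ` to its first `m` coordinates. -/
def restr {n : ℕ} (m : ℕ) (h : m ≤ n) (z : Fin n → ℝ) : Fin m → ℝ :=
  fun k => z (Fin.castLE h k)

lemma lexGt_asymm {m : ℕ} {u v : Fin m → ℝ} (h : lexGt u v) : ¬ lexGe v u := by
  obtain ⟨hge, hne⟩ := h
  rintro (heq | ⟨j, hj, hj2⟩)
  · exact hne heq.symm
  rcases hge with heq | ⟨k, hk, hk2⟩
  · exact hne heq
  rcases lt_trichotomy j k with hlt | rfl | hlt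
  · exact absurd hj2 (by rw [hk j hlt]; exact lt_irrefl _)
  · exact lt_irrefl _ (hk2.trans hj2)
  · exact absurd hk2 (by rw [hj k hlt]; exact lt_irrefl _)

theorem stmt1 (n m : ℕ) (hmn : m ≤ n) (π : Equiv.Perm (Fin n))
    (B₀ B₁ : Set (Fin n)) (hdisj : Disjoint B₀ B₁)
    (hcover : B₀ ∪ B₁ = {i : Fin n | (π i : ℕ) < m})
    (y : Fin n → ℝ) (hy : y = B₁.indicator fun _ => (1 : ℝ))
    (x : Fin n → ℝ) (hx01 : ∀ i, x i = 0 ∨ x i = 1)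
    (hx1 : ∀ i ∈ B₁, x i = 1) (hx0 : ∀ i ∈ B₀, x i = 0) :
    ∀ γ : Equiv.Perm (Fin n),
      lexGt (restr m hmn (pact π (pact γ y))) (restr m hmn (pact π y)) →
        lexGt (restr m hmn (pact π (pact γ x))) (restr m hmn (pact π x)) ∧
        ¬ lexGe (restr m hmn (pact π x)) (restr m hmn (pact π (pact γ x))) := by
  intro γ h
  -- x dominates y pointwise
  have hxy : ∀ i, y i ≤ x i := by
    intro i
    by_cases hi : i ∈ B₁
    · rw [hy, Set.indicator_of_mem hi, hx1 i hi]
    · rw [hy, Set.indicator_of_notMem hi]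
      rcases hx01 i with h0 | h1
      · simp [h0]
      · simp [h1]
  -- x and y agree on the first m coordinates after applying π
  have hbx : restr m hmn (pact π x) = restr m hmn (pact π y) := by
    funext k
    simp only [restr, pact]
    set j := π⁻¹ (Fin.castLE hmn k) with hj
    have hjmem : j ∈ B₀ ∪ B₁ := by
      rw [hcover]
      show ((π j : Fin n) : ℕ) < m
      rw [hj, ← Equiv.Perm.mul_apply, mul_inv_cancel, Equiv.Perm.one_apply]
      simp [Fin.isLt]
    rcases hjmem with hj0 | hj1
    · have hj1' : j ∉ B₁ := fun hh => (Set.disjoint_left.mp hdisj hj0) hh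
      rw [hx0 j hj0, hy, Set.indicator_of_notMem hj1']
    · rw [hx1 j hj1, hy, Set.indicator_of_mem hj1]
  set a := restr m hmn (pact π (pact γ x)) with ha
  set b := restr m hmn (pact π y) with hb
  set c := restr m hmn (pact π (pact γ y)) with hc
  have hca : ∀ i, c i ≤ a i := fun i => hxy _
  rw [hbx]
  obtain ⟨hge, hne⟩ := h
  have hex : ∃ k : Fin m, (∀ i : Fin m, i < k → c i = b i) ∧ b k < c k := by
    rcases hge with heq | hk
    · exact absurd heq hne
    · exact hk
  obtain ⟨k, hk, hk2⟩ := hex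
  have hak : b k < a k := lt_of_lt_of_le hk2 (hca k)
  -- find the least index where a and b differ
  have hSne : (Finset.univ.filter (fun i : Fin m => a i ≠ b i)).Nonempty :=
    ⟨k, by simp [ne_of_gt hak]⟩
  obtain ⟨k', hk'mem, hk'min⟩ := Finset.exists_min_image _ id hSne
  simp only [Finset.mem_filter, Finset.mem_univ, true_and] at hk'mem
  have hmin : ∀ i : Fin m, i < k' → a i = b i := by
    intro i hi
    by_contra hne'
    have := hk'min i (by simp [hne'])
    exact absurd hi (not_lt.mpr this)
  have hk'k : k' ≤ k := hk'min k (by simp [ne_of_gt hak])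
  have hstrict : b k' < a k' := by
    rcases lt_or_eq_of_le hk'k with hlt | rfl
    · have : b k' ≤ a k' := (hk k' hlt) ▸ hca k'
      exact lt_of_le_of_ne this (Ne.symm hk'mem)
    · exact hak
  have hgt : lexGt a b := by
    refine ⟨Or.inr ⟨k', hmin, hstrict⟩, ?_⟩
    intro heq
    exact hk'mem (by rw [heq])
  exact ⟨hgt, lexGt_asymm hgt⟩
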